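/- arXiv:2304.14786 — 3 statements merged into one kernel-verified Lean document; each statement's English description precedes it below -/
import Mathlib

section
/- Let π: [a,b] → ℝ≥0 satisfy |π(x) - π(y)| ≤ L‖x-y‖_∞^β on the box [a,b] ⊂ ℝ^s with z := ∫ π > 0, and let φ_m be its tensor-product hat function interpolant on the equispaced grid with resolution m = (m_1,...,m_s), with c := ∫ φ_m. Then ∫_{[a,b]} |π(x)/z - φ_m(x)/c| dx ≤ 2(L/z) ∏_{j=1}^s (b_j - a_j) · max_j ((b_j - a_j)/m_j)^β. -/
open MeasureTheory

/-- Equispaced grid point `y_ℓ = a + ℓ (b-a)/m`. -/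
noncomputable def gridPt (a b : ℝ) (m : ℕ) (ℓ : ℕ) : ℝ := a + ℓ * (b - a) / m

/-- The piecewise linear hat function `h_{ℓ,m}` on `[a,b]`. -/
noncomputable def hat (a b : ℝ) (m : ℕ) (ℓ : ℕ) (x : ℝ) : ℝ :=
  if ℓ = 0 then
    (if gridPt a b m 0 ≤ x ∧ x ≤ gridPt a b m 1 then (gridPt a b m 1 - x) * m / (b - a) else 0)
  else if ℓ = m then
    (if gridPt a b m (m - 1) ≤ x ∧ x ≤ gridPt a b m m then
      (x - gridPt a b m (m - 1)) * m / (b - a) else 0)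
  else
    (if gridPt a b m (ℓ - 1) ≤ x ∧ x ≤ gridPt a b m ℓ then
        (x - gridPt a b m (ℓ - 1)) * m / (b - a)
      else if gridPt a b m ℓ ≤ x ∧ x ≤ gridPt a b m (ℓ + 1) then
        (gridPt a b m (ℓ + 1) - x) * m / (b - a)
      else 0)

/-- The tensor-product hat function interpolant `φ_m`. -/
noncomputable def hatInterp (s : ℕ) (a b : Fin s → ℝ) (m : Fin s → ℕ)
    (π : (Fin s → ℝ) → ℝ) (x : Fin s → ℝ) : ℝ :=
  ∑ ℓ : (∀ j, Fin (m j + 1)),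
    π (fun j => gridPt (a j) (b j) (m j) (ℓ j)) * ∏ j, hat (a j) (b j) (m j) (ℓ j) (x j)





section OneD
variable {a b : ℝ} {m : ℕ} (hab : a < b) (hm : 1 ≤ m)

lemma gridPt_succ_sub (hab : a < b) (hm : 1 ≤ m) (ℓ : ℕ) :
    gridPt a b m (ℓ + 1) - gridPt a b m ℓ = (b - a) / m := by
  have hm0 : (m : ℝ) ≠ 0 := Nat.cast_ne_zero.mpr (by omega)
  simp only [gridPt]
  push_cast
  field_simp
  ring

lemma gridPt_strict_mono (hab : a < b) (hm : 1 ≤ m) {k ℓ : ℕ} (h : k < ℓ) :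
    gridPt a b m k < gridPt a b m ℓ := by
  have hm0 : (0:ℝ) < m := by exact_mod_cast Nat.pos_of_ne_zero (by omega)
  simp only [gridPt]
  have : (k:ℝ) < ℓ := by exact_mod_cast h
  have hba : (0:ℝ) < b - a := by linarith
  gcongr

lemma gridPt_mono (hab : a < b) (hm : 1 ≤ m) {k ℓ : ℕ} (h : k ≤ ℓ) :
    gridPt a b m k ≤ gridPt a b m ℓ := by
  rcases eq_or_lt_of_le h with rfl | h
  · exact le_refl _
  · exact (gridPt_strict_mono hab hm h).le

lemma gridPt_zero : gridPt a b m 0 = a := by simp [gridPt]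

lemma gridPt_last (hab : a < b) (hm : 1 ≤ m) : gridPt a b m m = b := by
  have hm0 : (m : ℝ) ≠ 0 := Nat.cast_ne_zero.mpr (by omega)
  rw [gridPt, mul_div_cancel_left₀ _ hm0]; ring

lemma gridPt_pred_sub (hab : a < b) (hm : 1 ≤ m) {ℓ : ℕ} (hℓ : 1 ≤ ℓ) :
    gridPt a b m ℓ - gridPt a b m (ℓ - 1) = (b - a) / m := by
  have h := gridPt_succ_sub (a := a) (b := b) hab hm (ℓ - 1)
  rwa [show ℓ - 1 + 1 = ℓ by omega] at h

lemma hat_nonneg (hab : a < b) (ℓ : ℕ) (x : ℝ) : 0 ≤ hat a b m ℓ x := by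
  have hba : (0:ℝ) ≤ b - a := by linarith
  have hm0 : (0:ℝ) ≤ m := Nat.cast_nonneg m
  unfold hat
  split_ifs
  all_goals try norm_num
  all_goals
    exact div_nonneg (mul_nonneg (by have h := ‹_ ∧ _›; linarith [h.1, h.2]) hm0) hba

lemma slope_le_one (hab : a < b) (hm : 1 ≤ m) {u v x : ℝ} (huv : v - u = (b - a) / m)
    (h1 : u ≤ x) : (v - x) * m / (b - a) ≤ 1 := by
  have hm0 : (0:ℝ) < m := by exact_mod_cast Nat.pos_of_ne_zero (by omega)
  have hba : (0:ℝ) < b - a := by linarith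
  rw [div_le_one hba]
  have h2 : v - x ≤ (b - a) / m := by linarith
  calc (v - x) * m ≤ ((b - a) / m) * m := mul_le_mul_of_nonneg_right h2 hm0.le
    _ = b - a := div_mul_cancel₀ _ hm0.ne'

lemma slope_le_one' (hab : a < b) (hm : 1 ≤ m) {u v x : ℝ} (huv : v - u = (b - a) / m)
    (h2 : x ≤ v) : (x - u) * m / (b - a) ≤ 1 := by
  have h := slope_le_one (u := -v) (v := -u) (x := -x) hab hm (by linarith) (by linarith)
  calc (x - u) * m / (b - a) = (-u - -x) * m / (b-a) := by ring_nf
    _ ≤ 1 := h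

lemma hat_le_one (hab : a < b) (hm : 1 ≤ m) (ℓ : ℕ) (x : ℝ) : hat a b m ℓ x ≤ 1 := by
  unfold hat
  split_ifs with h1 h2 h3 h4 h5 h6
  all_goals try norm_num
  · exact slope_le_one hab hm (by simpa using gridPt_succ_sub hab hm 0) h2.1
  · exact slope_le_one' hab hm (gridPt_pred_sub hab hm hm) h4.2
  · exact slope_le_one' hab hm (gridPt_pred_sub hab hm (by omega)) h5.2
  · exact slope_le_one hab hm (gridPt_succ_sub hab hm ℓ) h6.1

lemma hat_support (hab : a < b) (hm : 1 ≤ m) {ℓ : ℕ} {x : ℝ} (h : hat a b m ℓ x ≠ 0) :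
    |x - gridPt a b m ℓ| ≤ (b - a) / m := by
  have hba : (0:ℝ) ≤ (b - a) / m := div_nonneg (by linarith) (Nat.cast_nonneg m)
  unfold hat at h
  split_ifs at h with h1 h2 h3 h4 h5 h6
  all_goals try exact absurd rfl h
  · subst h1
    have hd := gridPt_succ_sub hab hm 0
    norm_num at hd ⊢
    rw [abs_le]; constructor <;> linarith [h2.1, h2.2]
  · rw [h3]
    have hd := gridPt_pred_sub hab hm hm
    rw [abs_le]; constructor <;> linarith [h4.1, h4.2]
  · have hd := gridPt_pred_sub hab hm (show 1 ≤ ℓ by omega)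
    rw [abs_le]; constructor <;> linarith [h5.1, h5.2]
  · have hd := gridPt_succ_sub hab hm ℓ
    rw [abs_le]; constructor <;> linarith [h6.1, h6.2]

lemma hat_eq_zero_of_ge (hab : a < b) (hm : 1 ≤ m) {ℓ : ℕ} {x : ℝ}
    (h : gridPt a b m (ℓ + 1) ≤ x) : hat a b m ℓ x = 0 := by
  unfold hat
  split_ifs with h1 h2 h3 h4 h5 h6
  all_goals try rfl
  · subst h1
    have hx : gridPt a b m 1 - x = 0 := by
      have := h2.2; norm_num at h; linarith
    rw [hx, zero_mul, zero_div]
  · exfalso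
    rw [h3] at h
    have := gridPt_strict_mono (a := a) (b := b) hab hm (show m < m + 1 by omega)
    linarith [h4.2]
  · exfalso
    have := gridPt_strict_mono (a := a) (b := b) hab hm (show ℓ < ℓ + 1 by omega)
    linarith [h5.2]
  · have hx : gridPt a b m (ℓ + 1) - x = 0 := by linarith [h6.2]
    rw [hx, zero_mul, zero_div]

lemma hat_eq_zero_of_le (hab : a < b) (hm : 1 ≤ m) {ℓ : ℕ} {x : ℝ} (hℓ : 1 ≤ ℓ)
    (h : x ≤ gridPt a b m (ℓ - 1)) : hat a b m ℓ x = 0 := by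
  unfold hat
  split_ifs with h1 h2 h3 h4 h5 h6
  all_goals try rfl
  · omega
  · rw [h3] at h
    have hx : x - gridPt a b m (m - 1) = 0 := by linarith [h4.1]
    rw [hx, zero_mul, zero_div]
  · have hx : x - gridPt a b m (ℓ - 1) = 0 := by linarith [h5.1]
    rw [hx, zero_mul, zero_div]
  · exfalso
    have := gridPt_strict_mono (a := a) (b := b) hab hm (show ℓ - 1 < ℓ by omega)
    linarith [h6.1]

lemma hat_left (hab : a < b) (hm : 1 ≤ m) {k : ℕ} (hk : k < m) {x : ℝ}
    (hx1 : gridPt a b m k ≤ x) (hx2 : x ≤ gridPt a b m (k + 1)) :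
    hat a b m k x = (gridPt a b m (k + 1) - x) * m / (b - a) := by
  rcases Nat.eq_zero_or_pos k with hk0 | hk1
  · subst hk0
    unfold hat
    rw [if_pos rfl, if_pos ⟨hx1, hx2⟩]
  · unfold hat
    rw [if_neg (by omega), if_neg (by omega)]
    by_cases hxk : x ≤ gridPt a b m k
    · rw [if_pos ⟨le_trans (gridPt_mono hab hm (by omega)) hx1, hxk⟩]
      have hd1 := gridPt_pred_sub hab hm hk1
      have hd2 := gridPt_succ_sub hab hm k
      have hxe : x = gridPt a b m k := le_antisymm hxk hx1
      have : x - gridPt a b m (k - 1) = gridPt a b m (k + 1) - x := by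
        rw [hxe]; linarith
      rw [this]
    · rw [if_neg (fun hc => hxk hc.2), if_pos ⟨hx1, hx2⟩]

lemma hat_right (hab : a < b) (hm : 1 ≤ m) {k : ℕ} (hk : k < m) {x : ℝ}
    (hx1 : gridPt a b m k ≤ x) (hx2 : x ≤ gridPt a b m (k + 1)) :
    hat a b m (k + 1) x = (x - gridPt a b m k) * m / (b - a) := by
  unfold hat
  rw [if_neg (by omega)]
  by_cases hkm : k + 1 = m
  · rw [if_pos hkm,
      if_pos ⟨le_trans (gridPt_mono hab hm (by omega : m - 1 ≤ k)) hx1,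
        le_trans hx2 (gridPt_mono hab hm (by omega : k + 1 ≤ m))⟩,
      show m - 1 = k by omega]
  · rw [if_neg hkm]
    rw [show k + 1 - 1 = k by omega, if_pos ⟨hx1, hx2⟩]

lemma exists_cell (hab : a < b) (hm : 1 ≤ m) {x : ℝ} (hx : x ∈ Set.Icc a b) :
    ∃ k : ℕ, k < m ∧ gridPt a b m k ≤ x ∧ x ≤ gridPt a b m (k + 1) := by
  have hba : (0:ℝ) < b - a := by linarith
  have hm0 : (0:ℝ) < m := by exact_mod_cast Nat.pos_of_ne_zero (by omega)
  have hxa := hx.1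
  have hxb := hx.2
  have ht0 : 0 ≤ (x - a) * m / (b - a) :=
    div_nonneg (mul_nonneg (by linarith) hm0.le) hba.le
  refine ⟨min ⌊(x - a) * m / (b - a)⌋₊ (m - 1), by omega, ?_, ?_⟩
  · have h1 : ((min ⌊(x - a) * m / (b - a)⌋₊ (m - 1) : ℕ) : ℝ) ≤ (x - a) * m / (b - a) :=
      le_trans (by exact_mod_cast Nat.cast_le.mpr (min_le_left _ _)) (Nat.floor_le ht0)
    rw [le_div_iff₀ hba] at h1
    simp only [gridPt]
    have h2 : ((min ⌊(x - a) * m / (b - a)⌋₊ (m - 1) : ℕ) : ℝ) * (b - a) / m ≤ x - a := by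
      rw [div_le_iff₀ hm0]; linarith
    linarith
  · rcases le_or_gt (⌊(x - a) * m / (b - a)⌋₊) (m - 1) with hc | hc
    · rw [min_eq_left hc]
      have h2 : (x - a) * m / (b - a) < (⌊(x - a) * m / (b - a)⌋₊ : ℝ) + 1 :=
        Nat.lt_floor_add_one _
      rw [div_lt_iff₀ hba] at h2
      simp only [gridPt]
      push_cast
      have h3 : x - a ≤ ((⌊(x - a) * m / (b - a)⌋₊ : ℝ) + 1) * (b - a) / m := by
        rw [le_div_iff₀ hm0]; linarith
      linarith
    · rw [min_eq_right (by omega)]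
      rw [show m - 1 + 1 = m by omega, gridPt_last hab hm]
      exact hxb

lemma sum_hat (hab : a < b) (hm : 1 ≤ m) {x : ℝ} (hx : x ∈ Set.Icc a b) :
    ∑ ℓ ∈ Finset.range (m + 1), hat a b m ℓ x = 1 := by
  obtain ⟨k, hk, hx1, hx2⟩ := exists_cell hab hm hx
  have hzero : ∀ ℓ ∈ Finset.range (m + 1), ℓ ∉ ({k, k + 1} : Finset ℕ) → hat a b m ℓ x = 0 := by
    intro ℓ _ hℓ
    simp only [Finset.mem_insert, Finset.mem_singleton] at hℓ
    push_neg at hℓ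
    rcases lt_or_gt_of_ne hℓ.1 with hlt | hgt
    · exact hat_eq_zero_of_ge hab hm
        (le_trans (gridPt_mono hab hm (by omega)) hx1)
    · exact hat_eq_zero_of_le hab hm (by omega)
        (le_trans hx2 (gridPt_mono hab hm (by omega)))
  rw [← Finset.sum_subset (by
    intro ℓ hℓ
    simp only [Finset.mem_insert, Finset.mem_singleton] at hℓ
    simp only [Finset.mem_range]
    omega) hzero]
  rw [Finset.sum_pair (by omega)]
  rw [hat_left hab hm hk hx1 hx2, hat_right hab hm hk hx1 hx2]
  have hd := gridPt_succ_sub (a := a) (b := b) hab hm k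
  have hm0 : (m:ℝ) ≠ 0 := Nat.cast_ne_zero.mpr (by omega)
  have hba : (b:ℝ) - a ≠ 0 := by intro hc; linarith
  calc (gridPt a b m (k+1) - x) * m / (b - a) + (x - gridPt a b m k) * m / (b - a)
      = (gridPt a b m (k+1) - gridPt a b m k) * m / (b - a) := by
        rw [← add_div]; ring_nf
    _ = ((b - a) / m * m) / (b - a) := by rw [hd]
    _ = 1 := by field_simp

end OneD

section OneDExtra
variable {a b : ℝ} {m : ℕ}

lemma gridPt_mem_Icc (hab : a < b) (hm : 1 ≤ m) {ℓ : ℕ} (hℓ : ℓ ≤ m) :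
    gridPt a b m ℓ ∈ Set.Icc a b := by
  constructor
  · have h := gridPt_mono (a := a) (b := b) hab hm (Nat.zero_le ℓ)
    rwa [gridPt_zero] at h
  · have h := gridPt_mono (a := a) (b := b) hab hm hℓ
    rwa [gridPt_last hab hm] at h

lemma hat_measurable (a b : ℝ) (m ℓ : ℕ) : Measurable (hat a b m ℓ) := by
  have hIcc : ∀ c d : ℝ, MeasurableSet {x : ℝ | c ≤ x ∧ x ≤ d} := fun c d =>
    measurableSet_Icc (a := c) (b := d)
  unfold hat
  split_ifs with h1 h2
  · exact Measurable.ite (hIcc _ _) (by fun_prop) (by fun_prop)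
  · exact Measurable.ite (hIcc _ _) (by fun_prop) (by fun_prop)
  · exact Measurable.ite (hIcc _ _) (by fun_prop)
      (Measurable.ite (hIcc _ _) (by fun_prop) (by fun_prop))

end OneDExtra

section MultiD
variable {s : ℕ} {a b : Fin s → ℝ} {m : Fin s → ℕ}

lemma sum_prod_hat (hab : ∀ j, a j < b j) (hm : ∀ j, 1 ≤ m j) {x : Fin s → ℝ}
    (hx : x ∈ Set.Icc a b) :
    ∑ ℓ : (∀ j, Fin (m j + 1)), ∏ j, hat (a j) (b j) (m j) (ℓ j) (x j) = 1 := by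
  have h := Finset.prod_univ_sum (fun j => (Finset.univ : Finset (Fin (m j + 1))))
    (fun j ℓ => hat (a j) (b j) (m j) ℓ (x j))
  rw [Fintype.piFinset_univ] at h
  rw [← h]
  have : ∀ j, ∑ ℓ : Fin (m j + 1), hat (a j) (b j) (m j) ℓ (x j) = 1 := by
    intro j
    rw [Fin.sum_univ_eq_sum_range (fun ℓ => hat (a j) (b j) (m j) ℓ (x j))]
    exact sum_hat (hab j) (hm j) ⟨hx.1 j, hx.2 j⟩
  simp [this]

lemma gridVec_mem_Icc (hab : ∀ j, a j < b j) (hm : ∀ j, 1 ≤ m j)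
    (ℓ : ∀ j, Fin (m j + 1)) :
    (fun j => gridPt (a j) (b j) (m j) (ℓ j)) ∈ Set.Icc a b := by
  rw [Set.mem_Icc]
  constructor <;> intro j
  · exact (gridPt_mem_Icc (hab j) (hm j) (by omega : ((ℓ j : ℕ)) ≤ m j)).1
  · exact (gridPt_mem_Icc (hab j) (hm j) (by omega : ((ℓ j : ℕ)) ≤ m j)).2

lemma hatInterp_err (hs : 1 ≤ s) (hab : ∀ j, a j < b j) (hm : ∀ j, 1 ≤ m j)
    (π : (Fin s → ℝ) → ℝ) {L β : ℝ} (hL : 0 < L) (hβ0 : 0 < β)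
    (hHolder : ∀ x ∈ Set.Icc a b, ∀ y ∈ Set.Icc a b, |π x - π y| ≤ L * dist x y ^ β)
    {x : Fin s → ℝ} (hx : x ∈ Set.Icc a b) :
    |π x - hatInterp s a b m π x| ≤ L * ⨆ j, ((b j - a j) / (m j : ℝ)) ^ β := by
  haveI : Nonempty (Fin s) := ⟨⟨0, by omega⟩⟩
  set S := ⨆ j, ((b j - a j) / (m j : ℝ)) ^ β with hS
  set M := Finset.univ.sup' Finset.univ_nonempty (fun j => (b j - a j) / (m j : ℝ)) with hM
  have hval0 : ∀ j, (0:ℝ) ≤ (b j - a j) / (m j : ℝ) := fun j =>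
    div_nonneg (by linarith [hab j]) (Nat.cast_nonneg _)
  have hM0 : 0 ≤ M := by
    rw [hM]
    exact le_trans (hval0 (Classical.arbitrary _))
      (Finset.le_sup' (f := fun j => (b j - a j) / (m j : ℝ)) (Finset.mem_univ _))
  have hMS : M ^ β ≤ S := by
    obtain ⟨j0, _, hj0⟩ := Finset.exists_mem_eq_sup' Finset.univ_nonempty
      (fun j => (b j - a j) / (m j : ℝ))
    rw [hM, hS, hj0]
    exact le_ciSup (f := fun j => ((b j - a j) / (m j : ℝ)) ^ β)
      (Set.Finite.bddAbove (Set.finite_range _)) j0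
  set y : (∀ j, Fin (m j + 1)) → (Fin s → ℝ) :=
    fun ℓ j => gridPt (a j) (b j) (m j) (ℓ j) with hy
  set P : (∀ j, Fin (m j + 1)) → ℝ :=
    fun ℓ => ∏ j, hat (a j) (b j) (m j) (ℓ j) (x j) with hP
  have hPnn : ∀ ℓ, 0 ≤ P ℓ := fun ℓ =>
    Finset.prod_nonneg (fun j _ => hat_nonneg (hab j) _ _)
  have hsum : ∑ ℓ, P ℓ = 1 := sum_prod_hat hab hm hx
  have key : ∀ ℓ, |π x - π (y ℓ)| * P ℓ ≤ (L * M ^ β) * P ℓ := by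
    intro ℓ
    rcases eq_or_ne (P ℓ) 0 with h0 | h0
    · rw [h0, mul_zero, mul_zero]
    · have hfac : ∀ j, hat (a j) (b j) (m j) (ℓ j) (x j) ≠ 0 := by
        intro j hj
        exact h0 (Finset.prod_eq_zero (Finset.mem_univ j) hj)
      have hdist : dist x (y ℓ) ≤ M := by
        rw [dist_pi_le_iff hM0]
        intro j
        rw [Real.dist_eq, hM]
        exact le_trans (hat_support (hab j) (hm j) (hfac j))
          (Finset.le_sup' (f := fun j => (b j - a j) / (m j : ℝ)) (Finset.mem_univ j))
      have h1 : |π x - π (y ℓ)| ≤ L * M ^ β := by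
        refine le_trans (hHolder x hx (y ℓ) (gridVec_mem_Icc hab hm ℓ)) ?_
        exact mul_le_mul_of_nonneg_left
          (Real.rpow_le_rpow dist_nonneg hdist hβ0.le) hL.le
      exact mul_le_mul_of_nonneg_right h1 (hPnn ℓ)
  have hrepr : π x - hatInterp s a b m π x = ∑ ℓ, (π x - π (y ℓ)) * P ℓ := by
    unfold hatInterp
    rw [show (∑ ℓ, (π x - π (y ℓ)) * P ℓ) = (∑ ℓ, π x * P ℓ) - ∑ ℓ, π (y ℓ) * P ℓ by
      rw [← Finset.sum_sub_distrib]; exact Finset.sum_congr rfl fun ℓ _ => by ring]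
    rw [← Finset.mul_sum, hsum, mul_one]
  calc |π x - hatInterp s a b m π x| = |∑ ℓ, (π x - π (y ℓ)) * P ℓ| := by rw [hrepr]
    _ ≤ ∑ ℓ, |(π x - π (y ℓ)) * P ℓ| := Finset.abs_sum_le_sum_abs _ _
    _ = ∑ ℓ, |π x - π (y ℓ)| * P ℓ := by
        exact Finset.sum_congr rfl fun ℓ _ => by rw [abs_mul, abs_of_nonneg (hPnn ℓ)]
    _ ≤ ∑ ℓ, (L * M ^ β) * P ℓ := Finset.sum_le_sum fun ℓ _ => key ℓ
    _ = L * M ^ β := by rw [← Finset.mul_sum, hsum, mul_one]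
    _ ≤ L * S := mul_le_mul_of_nonneg_left hMS hL.le

end MultiD

section Integrab
variable {s : ℕ} {a b : Fin s → ℝ} {m : Fin s → ℕ}

lemma hatInterp_measurable (π : (Fin s → ℝ) → ℝ) :
    Measurable (hatInterp s a b m π) := by
  unfold hatInterp
  apply Finset.measurable_sum
  intro ℓ _
  exact (Finset.measurable_prod Finset.univ fun j _ =>
    (hat_measurable (a j) (b j) (m j) (ℓ j)).comp (measurable_pi_apply j)).const_mul _

lemma hatInterp_nonneg (hab : ∀ j, a j < b j) (hm : ∀ j, 1 ≤ m j)
    (π : (Fin s → ℝ) → ℝ) (hπ0 : ∀ x ∈ Set.Icc a b, 0 ≤ π x) (x : Fin s → ℝ) :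
    0 ≤ hatInterp s a b m π x := by
  apply Finset.sum_nonneg
  intro ℓ _
  exact mul_nonneg (hπ0 _ (gridVec_mem_Icc hab hm ℓ))
    (Finset.prod_nonneg fun j _ => hat_nonneg (hab j) _ _)

lemma hatInterp_bound (hab : ∀ j, a j < b j) (hm : ∀ j, 1 ≤ m j)
    (π : (Fin s → ℝ) → ℝ) (x : Fin s → ℝ) :
    |hatInterp s a b m π x| ≤
      ∑ ℓ : (∀ j, Fin (m j + 1)), |π (fun j => gridPt (a j) (b j) (m j) (ℓ j))| := by
  refine le_trans (Finset.abs_sum_le_sum_abs _ _) (Finset.sum_le_sum fun ℓ _ => ?_)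
  rw [abs_mul]
  have h1 : |∏ j, hat (a j) (b j) (m j) (ℓ j) (x j)| ≤ 1 := by
    rw [abs_of_nonneg (Finset.prod_nonneg fun j _ => hat_nonneg (hab j) _ _)]
    exact Finset.prod_le_one (fun j _ => hat_nonneg (hab j) _ _)
      (fun j _ => hat_le_one (hab j) (hm j) _ _)
  calc |π _| * |∏ j, hat (a j) (b j) (m j) (ℓ j) (x j)| ≤ |π _| * 1 :=
        mul_le_mul_of_nonneg_left h1 (abs_nonneg _)
    _ = _ := mul_one _

lemma hatInterp_integrableOn (hab : ∀ j, a j < b j) (hm : ∀ j, 1 ≤ m j)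
    (π : (Fin s → ℝ) → ℝ) :
    IntegrableOn (hatInterp s a b m π) (Set.Icc a b) := by
  apply MeasureTheory.Measure.integrableOn_of_bounded
    (M := ∑ ℓ : (∀ j, Fin (m j + 1)), |π (fun j => gridPt (a j) (b j) (m j) (ℓ j))|)
  · exact ne_of_lt (isCompact_Icc.measure_lt_top)
  · exact (hatInterp_measurable π).aestronglyMeasurable
  · filter_upwards with x
    rw [Real.norm_eq_abs]
    exact hatInterp_bound hab hm π x

end Integrab

/-- `L¹` error of the normalized hat-function approximation of a Hölder continuous
density:  `∫ |π/z − φ_m/c| ≤ 2 (L/z) ∏_j (b_j − a_j) · max_j ((b_j − a_j)/m_j)^β`.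
(The metric on `Fin s → ℝ` is the sup-metric, so `dist x y = ‖x - y‖_∞`.) -/
theorem normalized_hat_approx_L1_bound (s : ℕ) (hs : 1 ≤ s)
    (a b : Fin s → ℝ) (hab : ∀ j, a j < b j) (m : Fin s → ℕ) (hm : ∀ j, 1 ≤ m j)
    (π : (Fin s → ℝ) → ℝ) (hπ0 : ∀ x ∈ Set.Icc a b, 0 ≤ π x)
    (hπi : IntegrableOn π (Set.Icc a b))
    (L : ℝ) (hL : 0 < L) (β : ℝ) (hβ : 0 < β ∧ β ≤ 1)
    (hHolder : ∀ x ∈ Set.Icc a b, ∀ y ∈ Set.Icc a b, |π x - π y| ≤ L * dist x y ^ β)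
    (z c : ℝ) (hz : z = ∫ x in Set.Icc a b, π x)
    (hc : c = ∫ x in Set.Icc a b, hatInterp s a b m π x)
    (hz0 : 0 < z) (hc0 : 0 < c) :
    (∫ x in Set.Icc a b, |π x / z - hatInterp s a b m π x / c|) ≤
      2 * (L / z) * (∏ j, (b j - a j)) * ⨆ j, ((b j - a j) / (m j : ℝ)) ^ β := by
  set φ := hatInterp s a b m π with hφ
  set S := ⨆ j, ((b j - a j) / (m j : ℝ)) ^ β with hSdef
  set V := ∏ j, (b j - a j) with hV
  set I := ∫ x in Set.Icc a b, |π x - φ x| with hI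
  have hφi : IntegrableOn φ (Set.Icc a b) := hatInterp_integrableOn hab hm π
  have hdiff_i : IntegrableOn (fun x => π x - φ x) (Set.Icc a b) := hπi.sub hφi
  have habs_i : IntegrableOn (fun x => |π x - φ x|) (Set.Icc a b) := hdiff_i.abs
  have hS0 : 0 ≤ S := by
    rw [hSdef]
    exact Real.iSup_nonneg fun j =>
      Real.rpow_nonneg (div_nonneg (by linarith [hab j]) (Nat.cast_nonneg _)) β
  have hV0 : 0 ≤ V := Finset.prod_nonneg fun j _ => by linarith [hab j]
  have hvol : (volume (Set.Icc a b)).toReal = V :=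
    Real.volume_Icc_pi_toReal fun j => (hab j).le
  have hIL : I ≤ L * S * V := by
    rw [hI]
    calc (∫ x in Set.Icc a b, |π x - φ x|) ≤ ∫ _x in Set.Icc a b, L * S := by
          apply setIntegral_mono_on habs_i
            (integrableOn_const isCompact_Icc.measure_lt_top.ne)
            measurableSet_Icc
          intro x hx
          exact hatInterp_err hs hab hm π hL hβ.1 hHolder hx
      _ = L * S * V := by
          rw [setIntegral_const, smul_eq_mul, measureReal_def, hvol]; ring
  have hI0 : 0 ≤ I := by
    rw [hI]
    exact setIntegral_nonneg measurableSet_Icc fun x _ => abs_nonneg _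
  have hcz : |c - z| ≤ I := by
    rw [hc, hz, ← integral_sub hφi hπi, hI]
    refine le_trans (le_of_eq (Real.norm_eq_abs _).symm)
      (le_trans (norm_integral_le_integral_norm _) (le_of_eq ?_))
    apply setIntegral_congr_fun measurableSet_Icc
    intro x _
    dsimp only
    rw [Real.norm_eq_abs, abs_sub_comm]
  have hpt : (fun x => |π x / z - φ x / c|) =
      fun x => |(π x - φ x) / z + (1 / z - 1 / c) * φ x| := by
    funext x
    congr 1
    field_simp
    ring
  have hint2a : IntegrableOn (fun x => |(π x - φ x) / z|) (Set.Icc a b) :=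
    (hdiff_i.div_const z).abs
  have hint2b : IntegrableOn (fun x => |(1 / z - 1 / c) * φ x|) (Set.Icc a b) :=
    (hφi.const_mul _).abs
  calc (∫ x in Set.Icc a b, |π x / z - φ x / c|)
      = ∫ x in Set.Icc a b, |(π x - φ x) / z + (1 / z - 1 / c) * φ x| := by rw [hpt]
    _ ≤ ∫ x in Set.Icc a b, (|(π x - φ x) / z| + |(1 / z - 1 / c) * φ x|) := by
        apply setIntegral_mono_on
          (((hdiff_i.div_const z).add (hφi.const_mul _)).abs)
          (hint2a.add hint2b) measurableSet_Icc
        intro x _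
        exact abs_add_le _ _
    _ = (∫ x in Set.Icc a b, |(π x - φ x) / z|)
        + ∫ x in Set.Icc a b, |(1 / z - 1 / c) * φ x| := integral_add hint2a hint2b
    _ = I / z + |1 / z - 1 / c| * c := by
        congr 1
        · rw [hI, ← integral_div]
          apply setIntegral_congr_fun measurableSet_Icc
          intro x _
          dsimp only
          rw [abs_div, abs_of_pos hz0]
        · have h1 : (∫ x in Set.Icc a b, |(1 / z - 1 / c) * φ x|) =
              |1 / z - 1 / c| * ∫ x in Set.Icc a b, |φ x| := by
            rw [← integral_const_mul]
            apply setIntegral_congr_fun measurableSet_Icc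
            intro x _
            dsimp only
            rw [abs_mul]
          rw [h1]
          congr 1
          rw [hc]
          apply setIntegral_congr_fun measurableSet_Icc
          intro x hx
          exact abs_of_nonneg (hatInterp_nonneg hab hm π hπ0 x)
    _ ≤ I / z + I / z := by
        have he : |1 / z - 1 / c| * c = |c - z| / z := by
          rw [show 1 / z - 1 / c = (c - z) / (z * c) by field_simp,
            abs_div, abs_of_pos (mul_pos hz0 hc0)]
          field_simp
        rw [he]
        gcongr
    _ = 2 * I / z := by ring
    _ ≤ 2 * (L * S * V) / z := by gcongr
    _ = 2 * (L / z) * V * S := by ring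
end

section
/- Under the greedy allocation of sample sizes N_k = ⌊N c_k / c⌋ for k ∈ L_δ* and N_{k_r} = N − Σ_{k ∈ L_δ*} N_k, one has Σ_{k ∈ L_δ} |c_k/c − N_k/N| ≤ (δ + 2(r−1))/N. -/
/-- Diophantine approximation property of the greedy sample-size allocation:
with `N_v = ⌊N c_v / c⌋` for `v < r - 1` and `N_{r-1} = N − ∑_{v<r-1} N_v`, one has
`∑_{v<r} |c_v/c − N_v/N| ≤ (δ + 2(r−1))/N`. -/
theorem greedy_allocation_dioph (M : ℕ) (cc : ℕ → ℝ)
    (hnn : ∀ v < M, 0 ≤ cc v)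
    (hdec : ∀ v w, v ≤ w → w < M → cc w ≤ cc v)
    (c : ℝ) (hsum : ∑ v ∈ Finset.range M, cc v = c) (hc : 0 < c)
    (N : ℕ) (hN : 2 ≤ N) (δ : ℝ) (hδ : 0 < δ ∧ δ < N)
    (r : ℕ) (hr1 : 1 ≤ r) (hrM : r ≤ M)
    (hr : 1 - δ / N ≤ ∑ v ∈ Finset.range r, cc v / c)
    (hrmin : ∀ r' < r, ∑ v ∈ Finset.range r', cc v / c < 1 - δ / N)
    (Nk : ℕ → ℤ)
    (hNk : ∀ v, Nk v = if v = r - 1 then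
        (N : ℤ) - ∑ w ∈ Finset.range (r - 1), ⌊(N : ℝ) * cc w / c⌋
      else ⌊(N : ℝ) * cc v / c⌋) :
    ∑ v ∈ Finset.range r, |cc v / c - (Nk v : ℝ) / N| ≤ (δ + 2 * ((r : ℝ) - 1)) / N := by
  obtain ⟨hδ0, hδN⟩ := hδ
  obtain ⟨s, rfl⟩ : ∃ s, r = s + 1 := ⟨r - 1, (Nat.succ_pred_eq_of_pos hr1).symm⟩
  have hN0 : (0 : ℝ) < N := by
    have : 0 < N := by omega
    exact_mod_cast this
  -- per-term floor error bounds
  have herr : ∀ v, 0 ≤ cc v / c - (⌊(N:ℝ) * cc v / c⌋ : ℝ) / N ∧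
      cc v / c - (⌊(N:ℝ) * cc v / c⌋ : ℝ) / N ≤ 1 / N := by
    intro v
    have key : cc v / c - (⌊(N:ℝ) * cc v / c⌋ : ℝ) / N
        = ((N:ℝ) * cc v / c - ⌊(N:ℝ) * cc v / c⌋) / N := by
      field_simp
    have h1 : (⌊(N:ℝ) * cc v / c⌋ : ℝ) ≤ (N:ℝ) * cc v / c := Int.floor_le _
    have h2 : (N:ℝ) * cc v / c < ⌊(N:ℝ) * cc v / c⌋ + 1 := Int.lt_floor_add_one _
    rw [key]
    refine ⟨div_nonneg (by linarith) hN0.le, ?_⟩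
    exact (div_le_div_iff_of_pos_right hN0).mpr (by linarith)
  rw [Finset.sum_range_succ]
  -- sum over first s terms
  have hbd : ∀ v ∈ Finset.range s, |cc v / c - (Nk v : ℝ) / N| ≤ 1 / N := by
    intro v hv
    have hv' : v < s := Finset.mem_range.mp hv
    rw [hNk v, if_neg (by omega)]
    rw [abs_of_nonneg (herr v).1]
    exact (herr v).2
  have hsum1 : ∑ v ∈ Finset.range s, |cc v / c - (Nk v : ℝ) / N| ≤ (s : ℝ) * (1 / N) := by
    have := Finset.sum_le_sum hbd
    simpa [Finset.sum_const, Finset.card_range, nsmul_eq_mul] using this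
  -- bounds on the error sum over first s terms
  have hBsum : ∑ w ∈ Finset.range s, (cc w / c - (⌊(N:ℝ) * cc w / c⌋ : ℝ) / N)
      = ∑ w ∈ Finset.range s, cc w / c
        - (∑ w ∈ Finset.range s, (⌊(N:ℝ) * cc w / c⌋ : ℝ)) / N := by
    rw [Finset.sum_sub_distrib, Finset.sum_div]
  have hB0 : 0 ≤ ∑ w ∈ Finset.range s, (cc w / c - (⌊(N:ℝ) * cc w / c⌋ : ℝ) / N) :=
    Finset.sum_nonneg fun w _ => (herr w).1
  have hB1 : ∑ w ∈ Finset.range s, (cc w / c - (⌊(N:ℝ) * cc w / c⌋ : ℝ) / N)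
      ≤ (s : ℝ) * (1 / N) := by
    have := Finset.sum_le_sum fun w (_ : w ∈ Finset.range s) => (herr w).2
    simpa [Finset.sum_const, Finset.card_range, nsmul_eq_mul] using this
  -- upper bound on partial sum of ratios
  have hSup : ∑ v ∈ Finset.range (s + 1), cc v / c ≤ 1 := by
    have h1 : ∑ v ∈ Finset.range M, cc v / c = 1 := by
      rw [← Finset.sum_div, hsum, div_self hc.ne']
    rw [← h1]
    apply Finset.sum_le_sum_of_subset_of_nonneg
    · exact Finset.range_subset_range.mpr hrM
    · intro v hv _
      exact div_nonneg (hnn v (Finset.mem_range.mp hv)) hc.le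
  -- last term
  have hlast : |cc s / c - (Nk s : ℝ) / N| ≤ (δ + s) / N := by
    rw [hNk s, if_pos (by omega)]
    have hcast : (((N : ℤ) - ∑ w ∈ Finset.range (s + 1 - 1), ⌊(N:ℝ) * cc w / c⌋ : ℤ) : ℝ)
        = (N : ℝ) - ∑ w ∈ Finset.range s, (⌊(N:ℝ) * cc w / c⌋ : ℝ) := by
      push_cast [Nat.add_sub_cancel]
      ring
    rw [hcast]
    have hhr : 1 - δ / N ≤ ∑ v ∈ Finset.range s, cc v / c + cc s / c := by
      rw [← Finset.sum_range_succ]; exact hr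
    have hup : ∑ v ∈ Finset.range s, cc v / c + cc s / c ≤ 1 := by
      rw [← Finset.sum_range_succ]; exact hSup
    have hdiv : ((N : ℝ) - ∑ w ∈ Finset.range s, (⌊(N:ℝ) * cc w / c⌋ : ℝ)) / N
        = 1 - (∑ w ∈ Finset.range s, (⌊(N:ℝ) * cc w / c⌋ : ℝ)) / N := by
      field_simp
    rw [hdiv, abs_le]
    rw [hBsum] at hB0 hB1
    constructor
    · have : (δ + s) / N = δ / N + (s : ℝ) * (1 / N) := by field_simp
      rw [this] at *
      nlinarith [hB0, hB1, hhr, hup]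
    · have hs0 : 0 ≤ (s : ℝ) := Nat.cast_nonneg s
      have : (δ + s) / N = δ / N + (s : ℝ) * (1 / N) := by field_simp
      rw [this]
      have hδN' : 0 ≤ δ / N := by positivity
      nlinarith [hB0, hB1, hhr, hup]
  calc ∑ v ∈ Finset.range s, |cc v / c - (Nk v : ℝ) / N| + |cc s / c - (Nk s : ℝ) / N|
      ≤ (s : ℝ) * (1 / N) + (δ + s) / N := add_le_add hsum1 hlast
    _ = (δ + 2 * (((s : ℝ) + 1) - 1)) / N := by field_simp; ring
    _ = (δ + 2 * ((((s + 1 : ℕ)) : ℝ) - 1)) / N := by push_cast; ring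
end

section
/- With the greedy sample allocation N_k described below, one has Σ_{k ∈ L_δ} c_k / N_k ≤ c · (δ + 3r − 2)/N. -/
/-- Bound for the sum `∑_{k ∈ L_δ} c_k / N_k` under the greedy sample-size
allocation: `∑_{v<r} c_v / N_v ≤ c (δ + 3r − 2)/N`. -/
theorem greedy_allocation_ratio_bound (M : ℕ) (cc : ℕ → ℝ)
    (hnn : ∀ v < M, 0 ≤ cc v)
    (hdec : ∀ v w, v ≤ w → w < M → cc w ≤ cc v)
    (c : ℝ) (hsum : ∑ v ∈ Finset.range M, cc v = c) (hc : 0 < c)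
    (N : ℕ) (hN : 2 ≤ N) (δ : ℝ) (hδ : 0 < δ ∧ δ < N)
    (r : ℕ) (hr1 : 1 ≤ r) (hrM : r ≤ M)
    (hr : 1 - δ / N ≤ ∑ v ∈ Finset.range r, cc v / c)
    (hrmin : ∀ r' < r, ∑ v ∈ Finset.range r', cc v / c < 1 - δ / N)
    (Nk : ℕ → ℤ)
    (hNk : ∀ v, Nk v = if v = r - 1 then
        (N : ℤ) - ∑ w ∈ Finset.range (r - 1), ⌊(N : ℝ) * cc w / c⌋
      else ⌊(N : ℝ) * cc v / c⌋)
    (hNkpos : ∀ v < r, 0 < Nk v) :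
    ∑ v ∈ Finset.range r, cc v / (Nk v : ℝ) ≤ c * (δ + 3 * (r : ℝ) - 2) / N := by
  obtain ⟨s, rfl⟩ := Nat.exists_eq_succ_of_ne_zero (Nat.one_le_iff_ne_zero.mp hr1)
  have hNpos : (0:ℝ) < N := by exact_mod_cast Nat.lt_of_lt_of_le (by norm_num) hN
  -- total mass of the first s+1 terms is at most c
  have hsum_le : ∑ v ∈ Finset.range (s+1), cc v ≤ c := by
    rw [← hsum]
    exact Finset.sum_le_sum_of_subset_of_nonneg
      (Finset.range_subset_range.mpr hrM) (fun i hi _ => hnn i (Finset.mem_range.mp hi))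
  -- bound for the first s terms
  have hkey : ∀ v ∈ Finset.range s, cc v / (Nk v : ℝ) ≤ 2 * c / N := by
    intro v hv
    have hv' := Finset.mem_range.mp hv
    have hvs : ¬ (v = s + 1 - 1) := by omega
    have hfloor : Nk v = ⌊(N:ℝ) * cc v / c⌋ := by rw [hNk v, if_neg hvs]
    have hpos : 0 < Nk v := hNkpos v (by omega)
    have h1 : (1:ℝ) ≤ (Nk v : ℝ) := by exact_mod_cast hpos
    have h2 : (N:ℝ) * cc v / c < (Nk v : ℝ) + 1 := by
      rw [hfloor]; push_cast; exact Int.lt_floor_add_one _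
    rw [div_lt_iff₀ hc] at h2
    rw [div_le_div_iff₀ (by linarith) hNpos]
    nlinarith [hc, h1, h2]
  -- bound for the last term
  have hlast : cc s / (Nk s : ℝ) ≤ c / N := by
    have hfloor : Nk s = (N:ℤ) - ∑ w ∈ Finset.range s, ⌊(N:ℝ) * cc w / c⌋ := by
      rw [hNk s]; norm_num
    have hpos : 0 < Nk s := hNkpos s (by omega)
    have hposR : (0:ℝ) < (Nk s : ℝ) := by exact_mod_cast hpos
    have hfl : (∑ w ∈ Finset.range s, (⌊(N:ℝ) * cc w / c⌋ : ℝ))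
        ≤ (N:ℝ) * (∑ w ∈ Finset.range s, cc w) / c := by
      rw [Finset.mul_sum, Finset.sum_div]
      exact Finset.sum_le_sum (fun w _ => Int.floor_le _)
    have hT : ∑ w ∈ Finset.range s, cc w + cc s ≤ c := by
      rw [← Finset.sum_range_succ]; exact hsum_le
    have hcast : ((Nk s : ℤ) : ℝ)
        = (N:ℝ) - ∑ w ∈ Finset.range s, (⌊(N:ℝ) * cc w / c⌋ : ℝ) := by
      rw [hfloor]; push_cast; ring
    have hNkge : (N:ℝ) * cc s / c ≤ (Nk s : ℝ) := by
      rw [hcast]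
      have key : (N:ℝ) * cc s / c + (N:ℝ) * (∑ w ∈ Finset.range s, cc w) / c ≤ N := by
        rw [← add_div, div_le_iff₀ hc]
        nlinarith [hNpos.le, hT]
      linarith
    rw [div_le_iff₀ hc] at hNkge
    rw [div_le_div_iff₀ hposR hNpos]
    linarith
  calc ∑ v ∈ Finset.range (s+1), cc v / (Nk v : ℝ)
      = ∑ v ∈ Finset.range s, cc v / (Nk v : ℝ) + cc s / (Nk s : ℝ) :=
        Finset.sum_range_succ _ _
    _ ≤ (s : ℝ) * (2 * c / N) + c / N := by
        have hb := Finset.sum_le_card_nsmul (Finset.range s) _ (2 * c / N) hkey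
        rw [Finset.card_range, nsmul_eq_mul] at hb
        exact add_le_add hb hlast
    _ ≤ c * (δ + 3 * ((s+1 : ℕ) : ℝ) - 2) / N := by
        push_cast
        have h1 : (s : ℝ) * (2 * c / N) + c / N = (2 * s * c + c) / N := by
          field_simp
        rw [h1, div_le_div_iff₀ hNpos hNpos]
        have hs : (0:ℝ) ≤ (s:ℝ) := Nat.cast_nonneg s
        nlinarith [mul_nonneg hc.le hδ.1.le, mul_nonneg hc.le hs, hNpos]
end
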